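/- Fix a two-dimensional centered t-distribution with one degree of freedom whose density is proportional to (1 + x^T K x)^{-3/2} with K = [[1, -0.1], [-0.1, 1]]. Then this density is not MTP₂: specifically, for x = (-1, 1) and y = (0, 0), p(x) p(y) > p(x ∧ y) p(x ∨ y). -/
import Mathlib


open Matrix

theorem stmt_2 (c : ℝ) (hc : 0 < c)
    (K : Matrix (Fin 2) (Fin 2) ℝ) (hK : K = !![1, -0.1; -0.1, 1])
    (p : (Fin 2 → ℝ) → ℝ)
    (hp : ∀ z, p z = c * (1 + z ⬝ᵥ (K *ᵥ z)) ^ (-(3:ℝ)/2))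
    (x y : Fin 2 → ℝ) (hx : x = ![-1, 1]) (hy : y = ![0, 0]) :
    p (x ⊓ y) * p (x ⊔ y) < p x * p y := by
  subst hK hx hy
  have hinf : (![(-1:ℝ), 1] ⊓ ![0, 0]) = ![(-1:ℝ), 0] := by
    funext i; fin_cases i <;> simp [Pi.inf_apply]
  have hsup : (![(-1:ℝ), 1] ⊔ ![0, 0]) = ![(0:ℝ), 1] := by
    funext i; fin_cases i <;> simp [Pi.sup_apply]
  rw [hinf, hsup, hp, hp, hp, hp]
  have e1 : (1 + ![(-1:ℝ), 0] ⬝ᵥ (!![1, -0.1; -0.1, 1] *ᵥ ![(-1:ℝ), 0])) = 2 := by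
    simp [dotProduct, mulVec, Fin.sum_univ_two]; norm_num
  have e2 : (1 + ![(0:ℝ), 1] ⬝ᵥ (!![1, -0.1; -0.1, 1] *ᵥ ![(0:ℝ), 1])) = 2 := by
    simp [dotProduct, mulVec, Fin.sum_univ_two]; norm_num
  have e3 : (1 + ![(-1:ℝ), 1] ⬝ᵥ (!![1, -0.1; -0.1, 1] *ᵥ ![(-1:ℝ), 1])) = 3.2 := by
    simp [dotProduct, mulVec, Fin.sum_univ_two]; norm_num
  have e4 : (1 + ![(0:ℝ), 0] ⬝ᵥ (!![1, -0.1; -0.1, 1] *ᵥ ![(0:ℝ), 0])) = 1 := by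
    simp [dotProduct, mulVec, Fin.sum_univ_two]
  rw [e1, e2, e3, e4, Real.one_rpow]
  have h22 : (2:ℝ) ^ (-(3:ℝ)/2) * (2:ℝ) ^ (-(3:ℝ)/2) = (4:ℝ) ^ (-(3:ℝ)/2) := by
    rw [← Real.mul_rpow (by norm_num) (by norm_num)]; norm_num
  have key : (4:ℝ) ^ (-(3:ℝ)/2) < (3.2:ℝ) ^ (-(3:ℝ)/2) := by
    apply Real.rpow_lt_rpow_of_neg (by norm_num) (by norm_num) (by norm_num)
  calc c * (2:ℝ) ^ (-(3:ℝ)/2) * (c * (2:ℝ) ^ (-(3:ℝ)/2))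
      = c * c * ((4:ℝ) ^ (-(3:ℝ)/2)) := by rw [← h22]; ring
    _ < c * c * ((3.2:ℝ) ^ (-(3:ℝ)/2)) := by
        apply mul_lt_mul_of_pos_left key (mul_pos hc hc)
    _ = c * (3.2:ℝ) ^ (-(3:ℝ)/2) * (c * 1) := by ring
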